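/- Let T be a locally finite infinite tree with p_c(T) < 1 (i.e., Bernoulli bond percolation on T with some retention parameter p < 1 has an infinite cluster with positive probability). Then simple random walk on T is transient. -/

import Mathlib

open MeasureTheory

/-- A (locally finite connected) graph is transient for simple random walk iff it admits
a unit flow of finite energy from some vertex to infinity (T. Lyons' criterion). -/
def IsTransient {V : Type*} (G : SimpleGraph V) : Prop :=
  ∃ o : V, ∃ θ : V → V → ℝ,
    (∀ x y, θ x y = -θ y x) ∧
    (∀ x y, ¬ G.Adj x y → θ x y = 0) ∧
    (∀ x, x ≠ o → ∑' y : V, θ x y = 0) ∧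
    (∑' y : V, θ o y = 1) ∧
    Summable (fun p : V × V => (θ p.1 p.2) ^ 2)

/-- The subgraph of `G` consisting of the retained (open) edges of the configuration
`ω`. -/
def percSubgraph {V : Type*} (G : SimpleGraph V) (ω : Sym2 V → Bool) : SimpleGraph V :=
  SimpleGraph.fromEdgeSet {e : Sym2 V | e ∈ G.edgeSet ∧ ω e = true}

/-- `μ` is the `p`-Bernoulli bond percolation measure on `G`: a probability measure on
configurations under which the states of the edges of `G` are independent, each edge
being retained with probability `p`. -/
def IsBernoulliPercolation {V : Type*} (G : SimpleGraph V) (p : ℝ)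
    (μ : Measure (Sym2 V → Bool)) : Prop :=
  IsProbabilityMeasure μ ∧
    ∀ (F : Finset (Sym2 V)), (∀ e ∈ F, e ∈ G.edgeSet) → ∀ f : Sym2 V → Bool,
      μ {ω | ∀ e ∈ F, ω e = f e}
        = ENNReal.ofReal (∏ e ∈ F, if f e then p else 1 - p)

open SimpleGraph
open scoped ENNReal

namespace PercTrans

variable {V : Type*} {T : SimpleGraph V}

/-- The unique path between two vertices of a tree. -/
noncomputable def tpath (htree : T.IsTree) (u v : V) : T.Walk u v :=
  (htree.existsUnique_path u v).choose

lemma tpath_isPath (htree : T.IsTree) (u v : V) : (tpath htree u v).IsPath :=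
  (htree.existsUnique_path u v).choose_spec.1

lemma tpath_unique (htree : T.IsTree) {u v : V} (q : T.Walk u v) (hq : q.IsPath) :
    q = tpath htree u v :=
  (htree.existsUnique_path u v).choose_spec.2 q hq

lemma tpath_self (htree : T.IsTree) (u : V) : tpath htree u u = Walk.nil :=
  (tpath_unique htree Walk.nil (Walk.IsPath.nil)).symm

variable (htree : T.IsTree) (o : V)

/-- depth of a vertex relative to the root `o`. -/
noncomputable def depth (v : V) : ℕ := (tpath htree o v).length

lemma depth_self : depth htree o o = 0 := by simp [depth, tpath_self]

lemma eq_root_of_depth_eq_zero {v : V} (h : depth htree o v = 0) : v = o :=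
  (Walk.eq_of_length_eq_zero h).symm

/-- `y` is a child of `x` (relative to root `o`). -/
def Child (x y : V) : Prop :=
  ∃ h : T.Adj x y, tpath htree o y = (tpath htree o x).concat h

lemma Child.adj {x y : V} (h : Child htree o x y) : T.Adj x y := h.1

lemma Child.depth_eq {x y : V} (h : Child htree o x y) :
    depth htree o y = depth htree o x + 1 := by
  obtain ⟨h, hp⟩ := h
  simp [depth, hp, Walk.length_concat]

lemma Child.tpath_eq {x y : V} (h : Child htree o x y) :
    tpath htree o y = (tpath htree o x).concat h.adj := by
  obtain ⟨h, hp⟩ := h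
  exact hp

end PercTrans

namespace PercTrans

variable {V : Type*} {T : SimpleGraph V} (htree : T.IsTree) (o : V)

attribute [local instance] Classical.propDecidable

lemma isPath_concat {u v w : V} {p : T.Walk u v} (hp : p.IsPath) (h : T.Adj v w)
    (hw : w ∉ p.support) : (p.concat h).IsPath := by
  rw [Walk.isPath_def, Walk.support_concat]
  simp [List.nodup_append, hp.support_nodup, hw]
  exact fun a ha hab => hw (hab ▸ ha)

lemma IsPath.of_concat {u v w : V} {p : T.Walk u v} {h : T.Adj v w}
    (hp : (p.concat h).IsPath) : p.IsPath := by
  rw [Walk.isPath_def, Walk.support_concat] at hp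
  rw [Walk.isPath_def]
  exact (List.nodup_append.mp hp).1

lemma child_or_child_of_adj {x y : V} (hxy : T.Adj x y) :
    Child htree o x y ∨ Child htree o y x := by
  by_cases hy : y ∈ (tpath htree o x).support
  · right
    have hpath := tpath_isPath htree o x
    have hqpath : ((tpath htree o x).takeUntil y hy).IsPath := hpath.takeUntil hy
    have hxq : x ∉ ((tpath htree o x).takeUntil y hy).support := by
      intro hxmem
      have hnodup : (((tpath htree o x).takeUntil y hy).support
          ++ ((tpath htree o x).dropUntil y hy).support.tail).Nodup := by
        have h2 := hpath.support_nodup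
        rw [← (tpath htree o x).take_spec hy, Walk.support_append] at h2
        exact h2
      have hxdrop : x ∈ ((tpath htree o x).dropUntil y hy).support.tail := by
        have hend : x ∈ ((tpath htree o x).dropUntil y hy).support := Walk.end_mem_support _
        rcases (Walk.mem_support_iff _).mp hend with h1 | h2
        · exact absurd h1.symm hxy.ne'
        · exact h2
      exact (List.disjoint_of_nodup_append hnodup) hxmem hxdrop
    have hconc : (((tpath htree o x).takeUntil y hy).concat hxy.symm).IsPath :=
      isPath_concat hqpath hxy.symm hxq
    have hqe : (tpath htree o x).takeUntil y hy = tpath htree o y :=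
      tpath_unique htree _ hqpath
    refine ⟨hxy.symm, ?_⟩
    rw [← tpath_unique htree _ hconc, hqe]
  · left
    refine ⟨hxy, ?_⟩
    exact (tpath_unique htree ((tpath htree o x).concat hxy)
      (isPath_concat (tpath_isPath htree o x) hxy hy)).symm

/-- the parent of a vertex. -/
noncomputable def parent (v : V) : V := (tpath htree o v).reverse.getVert 1

lemma Child.parent_eq {x v : V} (h : Child htree o x v) : parent htree o v = x := by
  obtain ⟨h, hp⟩ := h
  rw [parent, hp, Walk.reverse_concat]
  simp [Walk.getVert_cons_succ]

lemma exists_child_of_ne_root {v : V} (h : v ≠ o) : ∃ x, Child htree o x v := by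
  have hpath := tpath_isPath htree o v
  cases hp : tpath htree o v with
  | nil => exact absurd rfl h
  | cons hadj q =>
    obtain ⟨x, q', h', heq⟩ := Walk.exists_cons_eq_concat hadj q
    have hq' : (q'.concat h').IsPath := by rwa [hp, heq] at hpath
    have : q' = tpath htree o x := tpath_unique htree q' (IsPath.of_concat hq')
    exact ⟨x, h', by rw [hp, heq, this]⟩

lemma parent_child {v : V} (h : v ≠ o) : Child htree o (parent htree o v) v := by
  obtain ⟨x, hx⟩ := exists_child_of_ne_root htree o h
  rwa [hx.parent_eq]

lemma child_ne_root {x v : V} (h : Child htree o x v) : v ≠ o := by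
  intro hv
  subst hv
  have := h.depth_eq
  rw [depth_self] at this
  omega

end PercTrans

namespace PercTrans

variable {V : Type*} {T : SimpleGraph V} (htree : T.IsTree) (o : V)

attribute [local instance] Classical.propDecidable

/-- `u` is a descendant of `v` (relative to root `o`); includes `u = v`. -/
def Desc (v u : V) : Prop := v ∈ (tpath htree o u).support

lemma desc_self (u : V) : Desc htree o u u := Walk.end_mem_support _

lemma desc_root (u : V) : Desc htree o o u := Walk.start_mem_support _

lemma Desc.tpath_decomp {v u : V} (h : Desc htree o v u) :
    tpath htree o u = (tpath htree o v).append (tpath htree v u) := by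
  have h1 : (tpath htree o u).takeUntil v h = tpath htree o v :=
    tpath_unique htree _ ((tpath_isPath htree o u).takeUntil h)
  have h2 : (tpath htree o u).dropUntil v h = tpath htree v u :=
    tpath_unique htree _ ((tpath_isPath htree o u).dropUntil h)
  rw [← h1, ← h2]
  exact ((tpath htree o u).take_spec h).symm

lemma step_down {x y u : V} (hxy : Child htree o x y) (hyu : Desc htree o y u) :
    Desc htree o x u ∧ tpath htree x u = Walk.cons hxy.adj (tpath htree y u) := by
  have hdec := hyu.tpath_decomp
  rw [hxy.tpath_eq, Walk.concat_append] at hdec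
  have hdesc : Desc htree o x u := by
    rw [Desc, hdec]
    exact Walk.subset_support_append_left _ _ (Walk.end_mem_support _)
  have hpath : (Walk.cons hxy.adj (tpath htree y u)).IsPath := by
    have := tpath_isPath htree o u
    rw [hdec] at this
    exact this.of_append_right
  refine ⟨hdesc, (tpath_unique htree _ hpath).symm⟩

lemma step_up {x u : V} (hxu : Desc htree o x u) (hne : u ≠ x) :
    ∃ y, Child htree o x y ∧ Desc htree o y u := by
  have hdec := hxu.tpath_decomp
  cases hq : tpath htree x u with
  | nil => exact absurd rfl hne
  | cons hadj r =>
    rename_i y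
    rw [hq] at hdec
    have hpath := tpath_isPath htree o u
    rw [hdec, ← Walk.concat_append] at hpath
    have hchild : Child htree o x y :=
      ⟨hadj, (tpath_unique htree _ hpath.of_append_left).symm⟩
    refine ⟨y, hchild, ?_⟩
    rw [Desc, hdec, ← Walk.concat_append]
    exact Walk.subset_support_append_left _ _ (Walk.end_mem_support _)

end PercTrans

open MeasureTheory

namespace PercTrans

variable {V : Type*} {T : SimpleGraph V} (htree : T.IsTree) (o : V)

attribute [local instance] Classical.propDecidable

lemma percSubgraph_le (ω : Sym2 V → Bool) : percSubgraph T ω ≤ T := by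
  intro a b hab
  rw [percSubgraph, SimpleGraph.fromEdgeSet_adj] at hab
  exact (T.mem_edgeSet).mp hab.1.1

lemma reach_iff (ω : Sym2 V → Bool) (u v : V) :
    (percSubgraph T ω).Reachable u v ↔ ∀ e ∈ (tpath htree u v).edges, ω e = true := by
  constructor
  · intro hr
    obtain ⟨q⟩ := hr
    have hsub : ∀ e ∈ q.toPath.val.edges, e ∈ (percSubgraph T ω).edgeSet :=
      fun e he => Walk.edges_subset_edgeSet _ he
    have hsubT : ∀ e ∈ q.toPath.val.edges, e ∈ T.edgeSet := fun e he =>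
      (SimpleGraph.edgeSet_mono (percSubgraph_le ω)) (hsub e he)
    have hpath : (q.toPath.val.transfer T hsubT).IsPath :=
      (q.toPath.property).transfer hsubT
    have heq : q.toPath.val.transfer T hsubT = tpath htree u v :=
      tpath_unique htree _ hpath
    intro e he
    rw [← heq, Walk.edges_transfer] at he
    have h2 := hsub e he
    rw [percSubgraph, SimpleGraph.edgeSet_fromEdgeSet] at h2
    exact h2.1.2
  · intro hopen
    have hsub : ∀ e ∈ (tpath htree u v).edges, e ∈ (percSubgraph T ω).edgeSet := by
      intro e he
      rw [percSubgraph, SimpleGraph.edgeSet_fromEdgeSet]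
      exact ⟨⟨Walk.edges_subset_edgeSet _ he, hopen e he⟩,
        SimpleGraph.not_isDiag_of_mem_edgeSet T (Walk.edges_subset_edgeSet _ he)⟩
    exact ⟨(tpath htree u v).transfer _ hsub⟩

/-- The open descendant-cluster of `v`. -/
def S (ω : Sym2 V → Bool) (v : V) : Set V :=
  {u | Desc htree o v u ∧ ∀ e ∈ (tpath htree v u).edges, ω e = true}

lemma S_mem_step {ω : Sym2 V → Bool} {x y u : V} (hxy : Child htree o x y)
    (hopen : ω s(x, y) = true) (hu : u ∈ S htree o ω y) : u ∈ S htree o ω x := by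
  obtain ⟨hdesc, hconn⟩ := hu
  obtain ⟨hdx, hpx⟩ := step_down htree o hxy hdesc
  refine ⟨hdx, ?_⟩
  rw [hpx]
  intro e he
  rw [Walk.edges_cons, List.mem_cons] at he
  rcases he with he | he
  · rwa [he]
  · exact hconn e he

lemma S_infinite_step {ω : Sym2 V → Bool} {x y : V} (hxy : Child htree o x y)
    (hopen : ω s(x, y) = true) (hinf : (S htree o ω y).Infinite) :
    (S htree o ω x).Infinite :=
  hinf.mono fun _ hu => S_mem_step htree o hxy hopen hu

lemma exists_child_of_S_infinite {ω : Sym2 V → Bool} {x : V}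
    (hfin : (T.neighborSet x).Finite) (hinf : (S htree o ω x).Infinite) :
    ∃ y, Child htree o x y ∧ ω s(x, y) = true ∧ (S htree o ω y).Infinite := by
  by_contra hcon
  push_neg at hcon
  have hC : {y | Child htree o x y ∧ ω s(x, y) = true}.Finite :=
    hfin.subset fun y hy => hy.1.adj
  have hsub : S htree o ω x ⊆
      {x} ∪ ⋃ y ∈ {y | Child htree o x y ∧ ω s(x, y) = true}, S htree o ω y := by
    intro u hu
    by_cases hux : u = x
    · exact Or.inl (by simp [hux])
    · obtain ⟨hdesc, hconn⟩ := hu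
      obtain ⟨y, hxy, hyu⟩ := step_up htree o hdesc hux
      obtain ⟨_, hpx⟩ := step_down htree o hxy hyu
      have hconn' := hconn
      rw [hpx] at hconn'
      have hopen : ω s(x, y) = true := hconn' _ (by rw [Walk.edges_cons]; exact List.mem_cons_self)
      refine Or.inr (Set.mem_biUnion ⟨hxy, hopen⟩ ⟨hyu, fun e he => hconn' e ?_⟩)
      rw [Walk.edges_cons]
      exact List.mem_cons_of_mem _ he
  have hfin2 : ({x} ∪ ⋃ y ∈ {y | Child htree o x y ∧ ω s(x, y) = true},
      S htree o ω y).Finite := by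
    refine (Set.finite_singleton x).union (hC.biUnion fun y hy => ?_)
    exact hcon y hy.1 hy.2
  exact hinf (hfin2.subset hsub)

end PercTrans

namespace PercTrans

variable {V : Type*} {T : SimpleGraph V} (htree : T.IsTree) (o : V)

attribute [local instance] Classical.propDecidable

/-- `u` (≠ root) is "good" in `ω`: the edge to its parent is open, its descendant cluster
is infinite, and it is the least such child of its parent. -/
def Good (ω : Sym2 V → Bool) (u : V) : Prop :=
  ω s(parent htree o u, u) = true ∧ (S htree o ω u).Infinite ∧
    ∀ z, Child htree o (parent htree o u) z → WellOrderingRel z u →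
      ¬(ω s(parent htree o u, z) = true ∧ (S htree o ω z).Infinite)

/-- the event that `v` lies on the canonical ray of the open cluster of the root. -/
def R (v : V) : Set (Sym2 V → Bool) :=
  {ω | (S htree o ω o).Infinite ∧ ∀ u ∈ (tpath htree o v).support, u ≠ o → Good htree o ω u}

lemma R_root : R htree o o = {ω | (S htree o ω o).Infinite} := by
  ext ω
  simp only [R, tpath_self, Walk.support_nil, List.mem_singleton, Set.mem_setOf_eq]
  exact ⟨fun h => h.1, fun h => ⟨h, fun u hu hne => absurd hu hne⟩⟩

lemma R_child {x y : V} (hxy : Child htree o x y) :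
    R htree o y = R htree o x ∩ {ω | Good htree o ω y} := by
  have hy0 : y ≠ o := child_ne_root htree o hxy
  have hsupp : (tpath htree o y).support = (tpath htree o x).support.concat y := by
    rw [hxy.tpath_eq, Walk.support_concat, List.concat_eq_append]
  ext ω
  simp only [R, Set.mem_inter_iff, Set.mem_setOf_eq, hsupp, List.concat_eq_append,
    List.mem_append, List.mem_singleton]
  constructor
  · intro ⟨hinf, hall⟩
    exact ⟨⟨hinf, fun u hu hne => hall u (Or.inl hu) hne⟩,
      hall y (Or.inr rfl) hy0⟩
  · intro ⟨⟨hinf, hall⟩, hgood⟩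
    refine ⟨hinf, fun u hu hne => ?_⟩
    rcases hu with hu | rfl
    · exact hall u hu hne
    · exact hgood

lemma R_subset_root (v : V) : R htree o v ⊆ R htree o o := by
  rw [R_root]
  exact fun ω hω => hω.1

lemma R_infinite {v : V} {ω : Sym2 V → Bool} (hω : ω ∈ R htree o v) :
    (S htree o ω v).Infinite := by
  by_cases hv : v = o
  · subst hv; exact hω.1
  · exact (hω.2 v (Walk.end_mem_support _) hv).2.1

lemma R_cover {x : V} (hfin : (T.neighborSet x).Finite) {ω : Sym2 V → Bool}
    (hω : ω ∈ R htree o x) : ∃ y, Child htree o x y ∧ ω ∈ R htree o y := by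
  obtain ⟨y0, hy0⟩ := exists_child_of_S_infinite htree o hfin (R_infinite htree o hω)
  set M := {y | Child htree o x y ∧ ω s(x, y) = true ∧ (S htree o ω y).Infinite} with hM
  have hMne : M.Nonempty := ⟨y0, hy0⟩
  have hwf : WellFounded (WellOrderingRel (α := V)) := (IsWellFounded.wf)
  set y := hwf.min M hMne with hy
  have hyM : y ∈ M := hwf.min_mem M hMne
  have hpar : parent htree o y = x := hyM.1.parent_eq
  have hgood : Good htree o ω y := by
    refine ⟨by rw [hpar]; exact hyM.2.1, hyM.2.2, fun z hz hrz => ?_⟩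
    rw [hpar] at hz ⊢
    intro ⟨hz1, hz2⟩
    exact hwf.not_lt_min M (⟨hz, hz1, hz2⟩ : z ∈ M) hrz
  exact ⟨y, hyM.1, by rw [R_child htree o hyM.1]; exact ⟨hω, hgood⟩⟩

lemma R_sibling_disjoint {x y y' : V} (hxy : Child htree o x y) (hxy' : Child htree o x y')
    (hne : y ≠ y') : R htree o y ∩ R htree o y' = ∅ := by
  ext ω
  simp only [Set.mem_inter_iff, Set.mem_empty_iff_false, iff_false]
  intro ⟨h1, h2⟩
  rw [R_child htree o hxy] at h1
  rw [R_child htree o hxy'] at h2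
  have hg1 := h1.2
  have hg2 := h2.2
  rw [Set.mem_setOf_eq] at hg1 hg2
  have hp1 : parent htree o y = x := hxy.parent_eq
  have hp2 : parent htree o y' = x := hxy'.parent_eq
  rcases trichotomous_of (WellOrderingRel (α := V)) y y' with h | h | h
  · exact hg2.2.2 y (by rw [hp2]; exact hxy) h ⟨by rw [hp2, ← hp1]; exact hg1.1, hg1.2.1⟩
  · exact hne h
  · exact hg1.2.2 y' (by rw [hp1]; exact hxy') h ⟨by rw [hp1, ← hp2]; exact hg2.1, hg2.2.1⟩

lemma R_depth_disjoint : ∀ (n : ℕ) {v v' : V}, depth htree o v = n → depth htree o v' = n →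
    v ≠ v' → R htree o v ∩ R htree o v' = ∅ := by
  intro n
  induction n with
  | zero =>
      intro v v' hv hv' hne
      exact absurd ((eq_root_of_depth_eq_zero htree o hv).trans
        (eq_root_of_depth_eq_zero htree o hv').symm) hne
  | succ n ih =>
      intro v v' hv hv' hne
      have hvo : v ≠ o := fun h => by subst h; rw [depth_self] at hv; omega
      have hv'o : v' ≠ o := fun h => by subst h; rw [depth_self] at hv'; omega
      have hc : Child htree o (parent htree o v) v := parent_child htree o hvo
      have hc' : Child htree o (parent htree o v') v' := parent_child htree o hv'o
      by_cases hpp : parent htree o v = parent htree o v'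
      · rw [hpp] at hc
        exact R_sibling_disjoint htree o hc hc' hne
      · have hd : depth htree o (parent htree o v) = n := by
          have := hc.depth_eq; omega
        have hd' : depth htree o (parent htree o v') = n := by
          have := hc'.depth_eq; omega
        have hsub : R htree o v ⊆ R htree o (parent htree o v) := by
          rw [R_child htree o hc]; exact Set.inter_subset_left
        have hsub' : R htree o v' ⊆ R htree o (parent htree o v') := by
          rw [R_child htree o hc']; exact Set.inter_subset_left
        have := ih hd hd' hpp
        exact Set.eq_empty_of_subset_empty
          (le_trans (Set.inter_subset_inter hsub hsub') this.le)

lemma R_open_edges : ∀ (n : ℕ) (v : V), depth htree o v = n → ∀ {ω : Sym2 V → Bool},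
    ω ∈ R htree o v → ∀ e ∈ (tpath htree o v).edges, ω e = true := by
  intro n
  induction n with
  | zero =>
      intro v hv ω hω e he
      have := eq_root_of_depth_eq_zero htree o hv
      subst this
      rw [tpath_self] at he
      simp at he
  | succ n ih =>
      intro v hv ω hω e he
      have hvo : v ≠ o := fun h => by subst h; rw [depth_self] at hv; omega
      have hc : Child htree o (parent htree o v) v := parent_child htree o hvo
      have hd : depth htree o (parent htree o v) = n := by have := hc.depth_eq; omega
      have hωx : ω ∈ R htree o (parent htree o v) := by
        rw [R_child htree o hc] at hω; exact hω.1
      rw [hc.tpath_eq, Walk.edges_concat, List.concat_eq_append, List.mem_append] at he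
      rcases he with he | he
      · exact ih _ hd hωx e he
      · rw [List.mem_singleton] at he
        subst he
        rw [R_child htree o hc] at hω
        exact hω.2.1
end PercTrans

namespace PercTrans

variable {V : Type*} {T : SimpleGraph V} (htree : T.IsTree) (o : V)

attribute [local instance] Classical.propDecidable

lemma measurableSet_open (e : Sym2 V) : MeasurableSet {ω : Sym2 V → Bool | ω e = true} := by
  have : {ω : Sym2 V → Bool | ω e = true} = (fun ω : Sym2 V → Bool => ω e) ⁻¹' {true} := by
    ext ω; simp
  rw [this]
  exact (measurable_pi_apply e) (measurableSet_singleton true)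

lemma measurableSet_conn (v u : V) :
    MeasurableSet {ω : Sym2 V → Bool | ∀ e ∈ (tpath htree v u).edges, ω e = true} := by
  have : {ω : Sym2 V → Bool | ∀ e ∈ (tpath htree v u).edges, ω e = true}
      = ⋂ e ∈ {e | e ∈ (tpath htree v u).edges}, {ω : Sym2 V → Bool | ω e = true} := by
    ext ω; simp
  rw [this]
  exact MeasurableSet.biInter ((tpath htree v u).edges.finite_toSet.countable)
    (fun e _ => measurableSet_open e)

lemma measurableSet_S_mem (v u : V) :
    MeasurableSet {ω : Sym2 V → Bool | u ∈ S htree o ω v} := by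
  by_cases hd : Desc htree o v u
  · have : {ω : Sym2 V → Bool | u ∈ S htree o ω v}
        = {ω : Sym2 V → Bool | ∀ e ∈ (tpath htree v u).edges, ω e = true} := by
      ext ω; simp [S, hd]
    rw [this]
    exact measurableSet_conn htree v u
  · have : {ω : Sym2 V → Bool | u ∈ S htree o ω v} = ∅ := by
      ext ω; simp [S, hd]
    rw [this]
    exact MeasurableSet.empty

lemma measurableSet_S_infinite [Countable V] (v : V) :
    MeasurableSet {ω : Sym2 V → Bool | (S htree o ω v).Infinite} := by
  have : {ω : Sym2 V → Bool | (S htree o ω v).Infinite}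
      = ⋂ F : Finset V, ⋃ u : V, {ω : Sym2 V → Bool | u ∈ S htree o ω v ∧ u ∉ F} := by
    ext ω
    simp only [Set.mem_setOf_eq, Set.mem_iInter, Set.mem_iUnion]
    constructor
    · intro hinf F
      obtain ⟨u, hu1, hu2⟩ := hinf.exists_notMem_finset F
      exact ⟨u, hu1, hu2⟩
    · intro h
      by_contra hfin
      rw [Set.not_infinite] at hfin
      obtain ⟨u, hu1, hu2⟩ := h hfin.toFinset
      exact hu2 (hfin.mem_toFinset.mpr hu1)
  rw [this]
  refine MeasurableSet.iInter fun F => MeasurableSet.iUnion fun u => ?_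
  by_cases hF : u ∈ F
  · have : {ω : Sym2 V → Bool | u ∈ S htree o ω v ∧ u ∉ F} = ∅ := by ext ω; simp [hF]
    rw [this]; exact MeasurableSet.empty
  · have : {ω : Sym2 V → Bool | u ∈ S htree o ω v ∧ u ∉ F}
        = {ω : Sym2 V → Bool | u ∈ S htree o ω v} := by ext ω; simp [hF]
    rw [this]; exact measurableSet_S_mem htree o v u

lemma measurableSet_good [Countable V] (u : V) :
    MeasurableSet {ω : Sym2 V → Bool | Good htree o ω u} := by
  have : {ω : Sym2 V → Bool | Good htree o ω u}
      = ({ω : Sym2 V → Bool | ω s(parent htree o u, u) = true}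
        ∩ {ω : Sym2 V → Bool | (S htree o ω u).Infinite})
        ∩ ⋂ z : V, {ω : Sym2 V → Bool |
            Child htree o (parent htree o u) z → WellOrderingRel z u →
            ¬(ω s(parent htree o u, z) = true ∧ (S htree o ω z).Infinite)} := by
    ext ω
    simp only [Good, Set.mem_inter_iff, Set.mem_setOf_eq, Set.mem_iInter]
    tauto
  rw [this]
  refine (MeasurableSet.inter (measurableSet_open _) (measurableSet_S_infinite htree o u)).inter
    (MeasurableSet.iInter fun z => ?_)
  by_cases hz : Child htree o (parent htree o u) z ∧ WellOrderingRel z u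
  · have : {ω : Sym2 V → Bool |
        Child htree o (parent htree o u) z → WellOrderingRel z u →
          ¬(ω s(parent htree o u, z) = true ∧ (S htree o ω z).Infinite)}
        = ({ω : Sym2 V → Bool | ω s(parent htree o u, z) = true}
            ∩ {ω : Sym2 V → Bool | (S htree o ω z).Infinite})ᶜ := by
      ext ω; simp [hz.1, hz.2]
    rw [this]
    exact ((measurableSet_open _).inter (measurableSet_S_infinite htree o z)).compl
  · have : {ω : Sym2 V → Bool |
        Child htree o (parent htree o u) z → WellOrderingRel z u →
          ¬(ω s(parent htree o u, z) = true ∧ (S htree o ω z).Infinite)} = Set.univ := by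
      ext ω
      simp only [Set.mem_setOf_eq, Set.mem_univ, iff_true]
      intro h1 h2
      exact absurd ⟨h1, h2⟩ hz
    rw [this]; exact MeasurableSet.univ

lemma measurableSet_R [Countable V] (v : V) : MeasurableSet (R htree o v) := by
  have : R htree o v = {ω : Sym2 V → Bool | (S htree o ω o).Infinite}
      ∩ ⋂ u ∈ {u | u ∈ (tpath htree o v).support ∧ u ≠ o},
          {ω : Sym2 V → Bool | Good htree o ω u} := by
    ext ω
    simp only [R, Set.mem_inter_iff, Set.mem_setOf_eq, Set.mem_iInter]
    constructor
    · intro ⟨h1, h2⟩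
      exact ⟨h1, fun u hu => h2 u hu.1 hu.2⟩
    · intro ⟨h1, h2⟩
      exact ⟨h1, fun u hu hne => h2 u ⟨hu, hne⟩⟩
  rw [this]
  exact (measurableSet_S_infinite htree o o).inter
    (MeasurableSet.biInter (Set.Countable.mono (fun u hu => hu.1)
      ((tpath htree o v).support.finite_toSet.countable))
      fun u _ => measurableSet_good htree o u)

end PercTrans

namespace PercTrans

variable {V : Type*} {T : SimpleGraph V} (htree : T.IsTree) (o : V)

attribute [local instance] Classical.propDecidable

lemma level_finite (hlf : ∀ v : V, (T.neighborSet v).Finite) :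
    ∀ n : ℕ, {v : V | depth htree o v = n}.Finite := by
  intro n
  induction n with
  | zero =>
      refine (Set.finite_singleton o).subset fun v hv => ?_
      rw [Set.mem_setOf_eq] at hv
      exact eq_root_of_depth_eq_zero htree o hv
  | succ n ih =>
      refine (ih.biUnion (fun x _ => hlf x)).subset fun v hv => ?_
      rw [Set.mem_setOf_eq] at hv
      have hvo : v ≠ o := fun h => by subst h; rw [depth_self] at hv; omega
      have hc := parent_child htree o hvo
      have hd : depth htree o (parent htree o v) = n := by have := hc.depth_eq; omega
      exact Set.mem_biUnion hd hc.adj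

lemma countable_of_tree (hlf : ∀ v : V, (T.neighborSet v).Finite) (htree : T.IsTree)
    (o : V) : Countable V := by
  rw [← Set.countable_univ_iff]
  have huniv : (Set.univ : Set V) = ⋃ n : ℕ, {v : V | depth htree o v = n} :=
    (Set.eq_univ_of_univ_subset (fun v _ => Set.mem_iUnion.mpr ⟨depth htree o v, rfl⟩)).symm
  rw [huniv]
  exact Set.countable_iUnion fun n => (level_finite htree o hlf n).countable

end PercTrans

namespace PercTrans

variable {V : Type*} {T : SimpleGraph V} (htree : T.IsTree) (o : V)

attribute [local instance] Classical.propDecidable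

variable {p : ℝ} {μ : Measure (Sym2 V → Bool)}

lemma measure_conn (hB : IsBernoulliPercolation T p μ) (v : V) :
    μ {ω : Sym2 V → Bool | ∀ e ∈ (tpath htree o v).edges, ω e = true}
      = ENNReal.ofReal (p ^ depth htree o v) := by
  have hnodup : (tpath htree o v).edges.Nodup := (tpath_isPath htree o v).edges_nodup
  have hsub : ∀ e ∈ (tpath htree o v).edges.toFinset, e ∈ T.edgeSet := fun e he =>
    Walk.edges_subset_edgeSet _ (List.mem_toFinset.mp he)
  have h := hB.2 (tpath htree o v).edges.toFinset hsub (fun _ => true)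
  have hset : {ω : Sym2 V → Bool | ∀ e ∈ (tpath htree o v).edges.toFinset, ω e = true}
      = {ω : Sym2 V → Bool | ∀ e ∈ (tpath htree o v).edges, ω e = true} := by
    ext ω; simp [List.mem_toFinset]
  rw [hset] at h
  rw [h]
  congr 1
  rw [Finset.prod_congr rfl (fun e _ => if_pos rfl), Finset.prod_const,
    List.toFinset_card_of_nodup hnodup]
  rw [Walk.length_edges]
  rfl

lemma measure_R_le (hB : IsBernoulliPercolation T p μ) (v : V) :
    μ (R htree o v) ≤ ENNReal.ofReal (p ^ depth htree o v) := by
  rw [← measure_conn htree o hB v]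
  exact measure_mono fun ω hω => R_open_edges htree o (depth htree o v) v rfl hω

lemma p_nonneg (hB : IsBernoulliPercolation T p μ) {e₀ : Sym2 V}
    (he₀ : e₀ ∈ T.edgeSet) : 0 ≤ p := by
  by_contra hneg
  push_neg at hneg
  have hone : ({e₀} : Finset (Sym2 V)) = {e₀} := rfl
  have h1 := hB.2 {e₀} (by simpa using he₀) (fun _ => true)
  have h2 := hB.2 {e₀} (by simpa using he₀) (fun _ => false)
  have hs1 : {ω : Sym2 V → Bool | ∀ e ∈ ({e₀} : Finset (Sym2 V)), ω e = true}
      = {ω : Sym2 V → Bool | ω e₀ = true} := by ext ω; simp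
  have hs2 : {ω : Sym2 V → Bool | ∀ e ∈ ({e₀} : Finset (Sym2 V)), ω e = false}
      = {ω : Sym2 V → Bool | ω e₀ = true}ᶜ := by
    ext ω; simp [Bool.not_eq_true]
  rw [hs1, Finset.prod_singleton, if_pos rfl] at h1
  rw [hs2, Finset.prod_singleton, if_neg (by simp)] at h2
  have hprob : IsProbabilityMeasure μ := hB.1
  have hadd := measure_add_measure_compl (μ := μ) (measurableSet_open e₀)
  rw [h1, h2, measure_univ] at hadd
  rw [ENNReal.ofReal_eq_zero.mpr hneg.le, zero_add] at hadd
  have hgt : (1 : ℝ≥0∞) < ENNReal.ofReal (1 - p) := by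
    rw [← ENNReal.ofReal_one]
    exact (ENNReal.ofReal_lt_ofReal_iff (by linarith)).mpr (by linarith)
  rw [hadd] at hgt
  exact lt_irrefl _ hgt

/-- the finset of children of `x`. -/
noncomputable def childFinset (hlf : ∀ v : V, (T.neighborSet v).Finite) (x : V) : Finset V :=
  ((hlf x).subset (fun y (hy : y ∈ {y | Child htree o x y}) => hy.adj)).toFinset

lemma mem_childFinset {hlf : ∀ v : V, (T.neighborSet v).Finite} {x y : V} :
    y ∈ childFinset htree o hlf x ↔ Child htree o x y := Set.Finite.mem_toFinset _

lemma R_eq_biUnion (hlf : ∀ v : V, (T.neighborSet v).Finite) (x : V) :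
    R htree o x = ⋃ y ∈ childFinset htree o hlf x, R htree o y := by
  ext ω
  constructor
  · intro hω
    obtain ⟨y, hy, hωy⟩ := R_cover htree o (hlf x) hω
    exact Set.mem_biUnion (mem_childFinset htree o |>.mpr hy) hωy
  · intro hω
    obtain ⟨y, hy, hωy⟩ := Set.mem_iUnion₂.mp hω
    rw [R_child htree o (mem_childFinset htree o |>.mp hy)] at hωy
    exact hωy.1

lemma measure_R_partition [Countable V] (hlf : ∀ v : V, (T.neighborSet v).Finite) (x : V) :
    μ (R htree o x) = ∑ y ∈ childFinset htree o hlf x, μ (R htree o y) := by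
  rw [R_eq_biUnion htree o hlf x]
  refine measure_biUnion_finset ?_ (fun y _ => measurableSet_R htree o y)
  intro y hy y' hy' hne
  rw [Function.onFun, Set.disjoint_iff_inter_eq_empty]
  exact R_sibling_disjoint htree o (mem_childFinset htree o |>.mp hy)
    (mem_childFinset htree o |>.mp hy') hne

lemma level_sum_le [Countable V] (hprob : IsProbabilityMeasure μ) {Z : Finset V} {n : ℕ}
    (hZ : ∀ z ∈ Z, depth htree o z = n) : ∑ z ∈ Z, μ (R htree o z) ≤ 1 := by
  rw [← measure_biUnion_finset ?_ (fun z _ => measurableSet_R htree o z)]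
  · exact (measure_mono (Set.subset_univ _)).trans_eq measure_univ
  · intro z hz z' hz' hne
    rw [Function.onFun, Set.disjoint_iff_inter_eq_empty]
    exact R_depth_disjoint htree o n (hZ z hz) (hZ z' hz') hne

end PercTrans

open PercTrans in
/-- Let `T` be a locally finite infinite tree with `p_c(T) < 1`, i.e. for some retention
parameter `p < 1`, Bernoulli bond percolation on `T` produces an infinite cluster with
positive probability.  Then simple random walk on `T` is transient. -/
theorem transient_of_pc_lt_one {V : Type*} [Infinite V]
    (T : SimpleGraph V) (htree : T.IsTree)
    (hlf : ∀ v : V, (T.neighborSet v).Finite)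
    (hpc : ∃ p : ℝ, p < 1 ∧ ∃ μ : Measure (Sym2 V → Bool),
      IsBernoulliPercolation T p μ ∧
      0 < μ {ω | ∃ v : V, {u : V | (percSubgraph T ω).Reachable v u}.Infinite}) :
    IsTransient T := by
  classical
  obtain ⟨p, hp1, μ, hB, hpos⟩ := hpc
  have hprob : IsProbabilityMeasure μ := hB.1
  obtain ⟨o₀⟩ : Nonempty V := htree.isConnected.nonempty
  have hcount : Countable V := countable_of_tree hlf htree o₀
  -- find a root whose cluster is infinite with positive probability
  have hsub : {ω : Sym2 V → Bool | ∃ v : V, {u : V | (percSubgraph T ω).Reachable v u}.Infinite}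
      ⊆ ⋃ v : V, {ω : Sym2 V → Bool | (S htree v ω v).Infinite} := by
    intro ω hω
    obtain ⟨v, hv⟩ := hω
    refine Set.mem_iUnion.mpr ⟨v, hv.mono fun u hu => ?_⟩
    exact ⟨desc_root htree v u, (reach_iff htree ω v u).mp hu⟩
  have hexists : ∃ o : V, μ {ω : Sym2 V → Bool | (S htree o ω o).Infinite} ≠ 0 := by
    by_contra hall
    push_neg at hall
    have hz : μ (⋃ v : V, {ω : Sym2 V → Bool | (S htree v ω v).Infinite}) = 0 := by
      refine le_antisymm ?_ zero_le
      calc μ (⋃ v : V, {ω : Sym2 V → Bool | (S htree v ω v).Infinite})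
          ≤ ∑' v : V, μ {ω : Sym2 V → Bool | (S htree v ω v).Infinite} := measure_iUnion_le _
        _ = 0 := by simp [hall]
    have := lt_of_lt_of_le hpos (measure_mono hsub)
    rw [hz] at this
    exact lt_irrefl _ this
  obtain ⟨o, ho⟩ := hexists
  have hRo : μ (R htree o o) ≠ 0 := by rwa [R_root]
  have hRtop : ∀ v, μ (R htree o v) ≠ ⊤ := fun v => measure_ne_top μ _
  set cR : ℝ := (μ (R htree o o)).toReal with hcR
  have hc : 0 < cR := ENNReal.toReal_pos hRo (hRtop o)
  -- p is nonnegative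
  obtain ⟨v₁, hv₁⟩ := exists_ne o
  have hp0 : 0 ≤ p := by
    cases hq : tpath htree o v₁ with
    | nil => exact absurd rfl hv₁
    | cons hadj q => exact p_nonneg hB (T.mem_edgeSet.mpr hadj)
  -- the flow
  set m : V → ℝ := fun v => (μ (R htree o v)).toReal with hm
  have hm0 : ∀ v, 0 ≤ m v := fun v => ENNReal.toReal_nonneg
  have hmle : ∀ v, m v ≤ p ^ depth htree o v := fun v => by
    have := ENNReal.toReal_mono ENNReal.ofReal_ne_top (measure_R_le htree o hB v)
    rwa [ENNReal.toReal_ofReal (pow_nonneg hp0 _)] at this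
  have hmsum : ∀ x : V, m x = ∑ y ∈ childFinset htree o hlf x, m y := fun x => by
    rw [hm]
    simp only
    rw [measure_R_partition htree o hlf x, ENNReal.toReal_sum (fun y _ => hRtop y)]
  set θ : V → V → ℝ := fun x y =>
    (if Child htree o x y then m y else 0) / cR
      - (if Child htree o y x then m x else 0) / cR with hθ
  have hnadj : ∀ x y, ¬ T.Adj x y → θ x y = 0 := by
    intro x y hn
    rw [hθ]
    simp only
    rw [if_neg (fun h : Child htree o x y => hn (Child.adj htree o h)),
      if_neg (fun h : Child htree o y x => hn (Child.adj htree o h).symm)]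
    simp
  have hnotboth : ∀ x y, Child htree o x y → Child htree o y x → False := by
    intro x y h1 h2
    have e1 := Child.depth_eq htree o h1
    have e2 := Child.depth_eq htree o h2
    omega
  -- sums over neighbors
  have hsum_nbr : ∀ x : V, ∑' y : V, θ x y
      = (∑ y ∈ (hlf x).toFinset, (if Child htree o x y then m y else 0)) / cR
        - (∑ y ∈ (hlf x).toFinset, (if Child htree o y x then m x else 0)) / cR := by
    intro x
    have h0 : ∀ y ∉ (hlf x).toFinset, θ x y = 0 := by
      intro y hy
      refine hnadj x y fun hadj => hy ?_
      rw [Set.Finite.mem_toFinset]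
      exact hadj
    rw [tsum_eq_sum h0, hθ]
    simp only
    rw [Finset.sum_sub_distrib, Finset.sum_div, Finset.sum_div]
  have hchildsum : ∀ x : V, ∑ y ∈ (hlf x).toFinset, (if Child htree o x y then m y else 0)
      = m x := by
    intro x
    rw [← Finset.sum_filter]
    have hfe : (hlf x).toFinset.filter (fun y => Child htree o x y)
        = childFinset htree o hlf x := by
      ext y
      simp only [Finset.mem_filter, Set.Finite.mem_toFinset, mem_childFinset]
      exact ⟨fun h => h.2, fun h => ⟨Child.adj htree o h, h⟩⟩
    rw [hfe, ← hmsum x]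
  have hparsum : ∀ x : V, x ≠ o →
      ∑ y ∈ (hlf x).toFinset, (if Child htree o y x then m x else 0) = m x := by
    intro x hx
    rw [← Finset.sum_filter]
    have hfe : (hlf x).toFinset.filter (fun y => Child htree o y x) = {parent htree o x} := by
      ext y
      simp only [Finset.mem_filter, Set.Finite.mem_toFinset, Finset.mem_singleton]
      constructor
      · intro h
        exact (Child.parent_eq htree o h.2).symm
      · intro h
        subst h
        exact ⟨(Child.adj htree o (parent_child htree o hx)).symm, parent_child htree o hx⟩
    rw [hfe, Finset.sum_singleton]
  refine ⟨o, θ, ?_, hnadj, ?_, ?_, ?_⟩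
  · intro x y
    rw [hθ]
    simp only
    ring
  · -- conservation away from the root
    intro x hx
    rw [hsum_nbr x, hchildsum x, hparsum x hx, sub_self]
  · -- unit strength at the root
    have hparo : ∑ y ∈ (hlf o).toFinset, (if Child htree o y o then m o else 0) = 0 := by
      refine Finset.sum_eq_zero fun y _ => ?_
      rw [if_neg (fun h : Child htree o y o => child_ne_root htree o h rfl)]
    rw [hsum_nbr o, hchildsum o, hparo, zero_div, sub_zero, div_eq_one_iff_eq hc.ne']
  · -- finite energy
    have hmaster : ∀ Z : Finset V, ∑ z ∈ Z, (m z) ^ 2 ≤ (1 - p)⁻¹ := by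
      intro Z
      have hfib := Finset.sum_fiberwise_of_maps_to
        (g := fun z => depth htree o z) (f := fun z => (m z) ^ 2)
        (fun z hz => Finset.mem_image_of_mem _ hz : ∀ z ∈ Z, depth htree o z ∈
          Z.image (fun z => depth htree o z))
      rw [← hfib]
      have hinner : ∀ n ∈ Z.image (fun z => depth htree o z),
          ∑ z ∈ Z.filter (fun z => depth htree o z = n), (m z) ^ 2 ≤ p ^ n := by
        intro n _
        have hlev : ∑ z ∈ Z.filter (fun z => depth htree o z = n), m z ≤ 1 := by
          have h1 : ∑ z ∈ Z.filter (fun z => depth htree o z = n), μ (R htree o z) ≤ 1 :=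
            level_sum_le htree o hprob (fun z hz => (Finset.mem_filter.mp hz).2)
          have h2 := ENNReal.toReal_mono ENNReal.one_ne_top h1
          rwa [ENNReal.toReal_sum (fun z _ => hRtop z), ENNReal.toReal_one] at h2
        calc ∑ z ∈ Z.filter (fun z => depth htree o z = n), (m z) ^ 2
            ≤ ∑ z ∈ Z.filter (fun z => depth htree o z = n), p ^ n * m z := by
              refine Finset.sum_le_sum fun z hz => ?_
              have hdz : depth htree o z = n := (Finset.mem_filter.mp hz).2
              rw [pow_two]
              exact mul_le_mul_of_nonneg_right (hdz ▸ hmle z) (hm0 z)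
          _ = p ^ n * ∑ z ∈ Z.filter (fun z => depth htree o z = n), m z := by
              rw [Finset.mul_sum]
          _ ≤ p ^ n * 1 := mul_le_mul_of_nonneg_left hlev (pow_nonneg hp0 n)
          _ = p ^ n := mul_one _
      calc ∑ n ∈ Z.image (fun z => depth htree o z),
            ∑ z ∈ Z.filter (fun z => depth htree o z = n), (m z) ^ 2
          ≤ ∑ n ∈ Z.image (fun z => depth htree o z), p ^ n := Finset.sum_le_sum hinner
        _ ≤ ∑' n : ℕ, p ^ n := Summable.sum_le_tsum _ (fun n _ => pow_nonneg hp0 n)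
            (summable_geometric_of_lt_one hp0 hp1)
        _ = (1 - p)⁻¹ := tsum_geometric_of_lt_one hp0 hp1
    refine summable_of_sum_le (c := 2 * ((1 - p)⁻¹ / cR ^ 2))
      (fun q => sq_nonneg _) ?_
    intro U
    have hpt : ∀ q : V × V, (θ q.1 q.2) ^ 2
        ≤ (if Child htree o q.1 q.2 then (m q.2) ^ 2 / cR ^ 2 else 0)
          + (if Child htree o q.2 q.1 then (m q.1) ^ 2 / cR ^ 2 else 0) := by
      intro ⟨x, y⟩
      simp only
      by_cases h1 : Child htree o x y
      · have h2 : ¬ Child htree o y x := fun h2 => hnotboth x y h1 h2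
        rw [hθ]
        simp only [if_pos h1, if_neg h2]
        rw [zero_div, sub_zero, div_pow]
        simp
      · by_cases h2 : Child htree o y x
        · rw [hθ]
          simp only [if_pos h2, if_neg h1]
          rw [zero_div, zero_sub, neg_sq, div_pow]
          simp
        · rw [hnadj x y (fun hadj => ?_), if_neg h1, if_neg h2]
          · simp
          · rcases child_or_child_of_adj htree o hadj with h | h
            · exact h1 h
            · exact h2 h
    calc ∑ q ∈ U, (θ q.1 q.2) ^ 2
        ≤ ∑ q ∈ U, ((if Child htree o q.1 q.2 then (m q.2) ^ 2 / cR ^ 2 else 0)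
          + (if Child htree o q.2 q.1 then (m q.1) ^ 2 / cR ^ 2 else 0)) :=
          Finset.sum_le_sum fun q _ => hpt q
      _ = (∑ q ∈ U.filter (fun q => Child htree o q.1 q.2), (m q.2) ^ 2 / cR ^ 2)
          + (∑ q ∈ U.filter (fun q => Child htree o q.2 q.1), (m q.1) ^ 2 / cR ^ 2) := by
          rw [Finset.sum_add_distrib, Finset.sum_filter, Finset.sum_filter]
      _ ≤ (1 - p)⁻¹ / cR ^ 2 + (1 - p)⁻¹ / cR ^ 2 := by
          have hcR2 : (0:ℝ) < cR ^ 2 := by positivity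
          have hside1 : ∑ q ∈ U.filter (fun q => Child htree o q.1 q.2), (m q.2) ^ 2 / cR ^ 2
              ≤ (1 - p)⁻¹ / cR ^ 2 := by
            rw [← Finset.sum_div]
            refine (div_le_div_iff_of_pos_right hcR2).mpr ?_
            have hinj : ∀ q ∈ U.filter (fun q => Child htree o q.1 q.2),
                ∀ q' ∈ U.filter (fun q => Child htree o q.1 q.2),
                q.2 = q'.2 → q = q' := by
              intro q hq q' hq' heq
              have h1 := (Finset.mem_filter.mp hq).2
              have h2 := (Finset.mem_filter.mp hq').2
              have : q.1 = q'.1 := by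
                rw [← Child.parent_eq htree o h1, ← Child.parent_eq htree o h2, heq]
              exact Prod.ext this heq
            rw [← Finset.sum_image (g := Prod.snd) (f := fun y => (m y) ^ 2) hinj]
            exact hmaster _
          have hside2 : ∑ q ∈ U.filter (fun q => Child htree o q.2 q.1), (m q.1) ^ 2 / cR ^ 2
              ≤ (1 - p)⁻¹ / cR ^ 2 := by
            rw [← Finset.sum_div]
            refine (div_le_div_iff_of_pos_right hcR2).mpr ?_
            have hinj : ∀ q ∈ U.filter (fun q => Child htree o q.2 q.1),
                ∀ q' ∈ U.filter (fun q => Child htree o q.2 q.1),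
                q.1 = q'.1 → q = q' := by
              intro q hq q' hq' heq
              have h1 := (Finset.mem_filter.mp hq).2
              have h2 := (Finset.mem_filter.mp hq').2
              have : q.2 = q'.2 := by
                rw [← Child.parent_eq htree o h1, ← Child.parent_eq htree o h2, heq]
              exact Prod.ext heq this
            rw [← Finset.sum_image (g := Prod.fst) (f := fun y => (m y) ^ 2) hinj]
            exact hmaster _
          exact add_le_add hside1 hside2
      _ = 2 * ((1 - p)⁻¹ / cR ^ 2) := by ring
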